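/- arXiv:1306.3882 — 6 statements merged into one kernel-verified Lean document; each statement's English description precedes it below -/
import Mathlib

section
/- Let (V,E) be a finite directed graph with distinguished vertices I, F ∈ V. There exists a covering path from I to F if and only if: (1) every vertex of V is reachable from I, (2) F is reachable from every vertex of V, and (3) for all pairs of vertices v1, v2 ∈ V \ {I,F}, either v2 is reachable from v1 or v1 is reachable from v2. -/
section Aux
variable {V : Type*} {E : V → V → Prop}

lemma head_reaches : ∀ {p : List V}, p.Chain' E → ∀ {a : V}, p.head? = some a →
    ∀ v ∈ p, Relation.ReflTransGen E a v
  | [], _, _, h, _, _ => by simp at h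
  | x :: t, hc, a, ha, v, hv => by
    simp only [List.head?_cons, Option.some_inj] at ha; subst ha
    rcases List.mem_cons.1 hv with rfl | hv
    · exact .refl
    · cases t with
      | nil => simp at hv
      | cons y s =>
        have h1 : E x y := (List.isChain_cons_cons.1 hc).1
        exact (Relation.ReflTransGen.single h1).trans
          (head_reaches (List.isChain_cons_cons.1 hc).2 rfl v hv)

lemma reaches_last : ∀ {p : List V}, p.Chain' E → ∀ {b : V}, p.getLast? = some b →
    ∀ v ∈ p, Relation.ReflTransGen E v b
  | [], _, _, h, _, _ => by simp at h
  | x :: t, hc, b, hb, v, hv => by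
    cases t with
    | nil =>
      simp only [List.getLast?_singleton, Option.some_inj] at hb
      simp only [List.mem_singleton] at hv
      subst hb; subst hv; exact .refl
    | cons y s =>
      have hb' : (y :: s).getLast? = some b := by
        rwa [List.getLast?_cons_cons] at hb
      rcases List.mem_cons.1 hv with rfl | hv
      · have h1 : E v y := (List.isChain_cons_cons.1 hc).1
        exact (Relation.ReflTransGen.single h1).trans
          (reaches_last (List.isChain_cons_cons.1 hc).2 hb' y (by simp))
      · exact reaches_last (List.isChain_cons_cons.1 hc).2 hb' v hv

lemma chain'_comparable : ∀ {p : List V}, p.Chain' E → ∀ {a b : V}, a ∈ p → b ∈ p →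
    Relation.ReflTransGen E a b ∨ Relation.ReflTransGen E b a
  | [], _, _, _, ha, _ => by simp at ha
  | x :: t, hc, a, b, ha, hb => by
    rcases List.mem_cons.1 ha with rfl | ha
    · exact Or.inl (head_reaches hc rfl b hb)
    · rcases List.mem_cons.1 hb with rfl | hb
      · exact Or.inr (head_reaches hc rfl a ha)
      · exact chain'_comparable (List.isChain_cons.1 hc).2 ha hb

lemma rtg_walk {a b : V} (h : Relation.ReflTransGen E a b) :
    ∃ w : List V, w.Chain' E ∧ w.head? = some a ∧ w.getLast? = some b := by
  induction h with
  | refl => exact ⟨[a], List.isChain_singleton _, by simp, by simp⟩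
  | @tail b c hab hbc ih =>
    obtain ⟨w, hw, hh, hl⟩ := ih
    refine ⟨w ++ [c], ?_, ?_, by simp⟩
    · refine List.isChain_append.2 ⟨hw, by simp, ?_⟩
      intro x hx z hz
      rw [hl] at hx
      simp only [Option.mem_def, Option.some_inj] at hx
      simp only [List.head?_cons, Option.mem_def, Option.some_inj] at hz
      subst hx; subst hz; exact hbc
    · cases w with
      | nil => simp at hh
      | cons x s => simpa using hh

lemma walk_of_chain : ∀ {L : List V}, L ≠ [] → L.Chain' (Relation.ReflTransGen E) →
    ∃ w : List V, w.Chain' E ∧ w.head? = L.head? ∧ w.getLast? = L.getLast? ∧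
      ∀ v ∈ L, v ∈ w
  | [], h, _ => absurd rfl h
  | [a], _, _ => ⟨[a], List.isChain_singleton _, rfl, rfl, by simp⟩
  | a :: b :: t, _, hc => by
    have h1 : Relation.ReflTransGen E a b := (List.isChain_cons_cons.1 hc).1
    obtain ⟨w1, hw1, hh1, hl1⟩ := rtg_walk h1
    obtain ⟨w2, hw2, hh2, hl2, hm2⟩ :=
      walk_of_chain (L := b :: t) (by simp) (List.isChain_cons_cons.1 hc).2
    cases w2 with
    | nil => simp at hh2
    | cons y s =>
      have hyb : y = b := by simpa using hh2
      subst hyb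
      have hbw1 : y ∈ w1 := by
        obtain ⟨h, rfl⟩ := List.mem_getLast?_eq_getLast (l := w1) (x := y) (by simp [hl1])
        exact List.getLast_mem h
      have haw1 : a ∈ w1 := by
        rw [List.eq_cons_of_mem_head? (l := w1) (x := a) (by simp [hh1])]; simp
      refine ⟨w1 ++ s, ?_, ?_, ?_, ?_⟩
      · refine List.isChain_append.2 ⟨hw1, (List.isChain_cons.1 hw2).2, ?_⟩
        intro x hx z hz
        rw [hl1] at hx
        simp only [Option.mem_def, Option.some_inj] at hx
        subst hx
        exact (List.isChain_cons.1 hw2).1 z hz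
      · cases w1 with
        | nil => simp at hh1
        | cons u r => simpa using hh1
      · cases s with
        | nil =>
          simp only [List.getLast?_singleton] at hl2
          simp only [List.append_nil, List.getLast?_cons_cons]
          rw [hl1, hl2]
        | cons z r =>
          rw [List.getLast?_append_of_ne_nil _ (by simp), List.getLast?_cons_cons,
            ← hl2, List.getLast?_cons_cons]
      · intro v hv
        rcases List.mem_cons.1 hv with rfl | hv
        · exact List.mem_append.2 (Or.inl haw1)
        · rcases List.mem_cons.1 (hm2 v hv) with rfl | hvs
          · exact List.mem_append.2 (Or.inl hbw1)
          · exact List.mem_append.2 (Or.inr hvs)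

end Aux


/-- Lemma 1 (Existence of a covering path):
In a finite directed graph `(V, E)` with distinguished vertices `I, F`, a covering
path from `I` to `F` (a walk starting at `I`, ending at `F`, visiting every vertex
at least once) exists iff every vertex is reachable from `I`, `F` is reachable from
every vertex, and any two vertices outside `{I, F}` are reachable one from the other
in at least one direction. -/
theorem covering_path_exists_iff {V : Type*} [Fintype V] (E : V → V → Prop) (I F : V) :
    (∃ p : List V, p.Chain' E ∧ p.head? = some I ∧ p.getLast? = some F ∧ ∀ v : V, v ∈ p) ↔
    ((∀ v : V, Relation.ReflTransGen E I v) ∧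
     (∀ v : V, Relation.ReflTransGen E v F) ∧
     (∀ v1 v2 : V, v1 ≠ I → v1 ≠ F → v2 ≠ I → v2 ≠ F →
        Relation.ReflTransGen E v1 v2 ∨ Relation.ReflTransGen E v2 v1)) := by
  classical
  constructor
  · rintro ⟨p, hc, hh, hl, hm⟩
    exact ⟨fun v => head_reaches hc hh v (hm v),
           fun v => reaches_last hc hl v (hm v),
           fun v1 v2 _ _ _ _ => chain'_comparable hc (hm v1) (hm v2)⟩
  · rintro ⟨h1, h2, h3⟩
    set S := {v : V // v ≠ I ∧ v ≠ F} with hS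
    let r : S → S → Prop := fun a b => Relation.ReflTransGen E a.1 b.1
    haveI : DecidableRel r := fun a b => Classical.dec _
    haveI : IsTotal S r := ⟨fun a b => h3 a.1 b.1 a.2.1 a.2.2 b.2.1 b.2.2⟩
    haveI : IsTrans S r := ⟨fun _ _ _ hab hbc => hab.trans hbc⟩
    let l' : List S := (Finset.univ : Finset S).toList.insertionSort r
    have hsort : l'.Chain' r := (List.pairwise_insertionSort r _).isChain
    let M : List V := l'.map Subtype.val
    have hMchain : M.Chain' (Relation.ReflTransGen E) := by
      rw [List.Chain', List.isChain_map]
      exact hsort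
    have hCchain : ((I :: M) ++ [F]).Chain' (Relation.ReflTransGen E) := by
      refine List.isChain_append.2 ⟨?_, by simp, ?_⟩
      · exact List.isChain_cons.2 ⟨fun y _ => h1 y, hMchain⟩
      · intro x _ y hy
        simp only [List.head?_cons, Option.mem_def, Option.some_inj] at hy
        subst hy
        exact h2 x
    obtain ⟨w, hw, hwh, hwl, hwm⟩ := walk_of_chain (by simp) hCchain
    refine ⟨w, hw, ?_, ?_, ?_⟩
    · rw [hwh]; simp
    · rw [hwl, List.getLast?_append_of_ne_nil _ (by simp)]; simp
    · intro v
      by_cases hvI : v = I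
      · subst hvI; exact hwm v (by simp)
      by_cases hvF : v = F
      · subst hvF; exact hwm v (by simp)
      · refine hwm v ?_
        have : (⟨v, hvI, hvF⟩ : S) ∈ l' :=
          (List.perm_insertionSort r _).mem_iff.2 (by simp [Finset.mem_toList])
        have : v ∈ M := List.mem_map.2 ⟨_, this, rfl⟩
        simp [this]
end

section
/- Let (V,E) be a finite directed graph with distinguished vertices I, F ∈ V, I ≠ F, such that (1) every vertex of V is reachable from I, (2) F is reachable from every vertex of V, and (3) for all pairs of vertices v1, v2 ∈ V \ {I,F}, either v2 is reachable from v1 or v1 is reachable from v2. Then the transitive closure (V,E') contains a Hamiltonian path from I to F. -/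
/-- If in a finite directed graph `(V, E)` with `I ≠ F` every vertex is reachable from
`I`, `F` is reachable from every vertex, and any two vertices outside `{I, F}` are
reachable one from the other in at least one direction, then the transitive closure
(edges given by nonempty walks, i.e. `Relation.TransGen E`) contains a Hamiltonian
path from `I` to `F`. -/
theorem transitive_closure_hamiltonian_path {V : Type*} [Fintype V] (E : V → V → Prop)
    (I F : V) (hIF : I ≠ F)
    (h1 : ∀ v : V, Relation.ReflTransGen E I v)
    (h2 : ∀ v : V, Relation.ReflTransGen E v F)
    (h3 : ∀ v1 v2 : V, v1 ≠ I → v1 ≠ F → v2 ≠ I → v2 ≠ F →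
       Relation.ReflTransGen E v1 v2 ∨ Relation.ReflTransGen E v2 v1) :
    ∃ p : List V, p.Chain' (Relation.TransGen E) ∧ p.head? = some I ∧
      p.getLast? = some F ∧ p.Nodup ∧ ∀ v : V, v ∈ p := by
  classical
  let S := {v : V // v ≠ I ∧ v ≠ F}
  let r : S → S → Prop := fun a b => Relation.ReflTransGen E a.1 b.1
  haveI : DecidableRel r := fun a b => Classical.dec _
  haveI : Std.Total r := ⟨fun a b => h3 a.1 b.1 a.2.1 a.2.2 b.2.1 b.2.2⟩
  haveI : IsTrans S r := ⟨fun a b c hab hbc => hab.trans hbc⟩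
  let l : List S := List.insertionSort r (Finset.univ : Finset S).toList
  have hperm : l.Perm (Finset.univ : Finset S).toList := List.perm_insertionSort r _
  have hlnd : l.Nodup := hperm.nodup_iff.2 (Finset.nodup_toList _)
  have hlsorted : l.Pairwise r := List.pairwise_insertionSort r _
  let m : List V := l.map Subtype.val
  have hmI : ∀ v ∈ m, v ≠ I := by
    intro v hv; rcases List.mem_map.1 hv with ⟨a, _, rfl⟩; exact a.2.1
  have hmF : ∀ v ∈ m, v ≠ F := by
    intro v hv; rcases List.mem_map.1 hv with ⟨a, _, rfl⟩; exact a.2.2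
  have hmnd : m.Nodup := hlnd.map Subtype.val_injective
  have hmpw : m.Pairwise (Relation.ReflTransGen E) :=
    List.Pairwise.map _ (fun _ _ h => h) hlsorted
  have hnd : (I :: m ++ [F]).Nodup := by
    rw [List.cons_append]
    refine List.nodup_cons.2 ⟨?_, ?_⟩
    · intro h
      rcases List.mem_append.1 h with h | h
      · exact hmI _ h rfl
      · rw [List.mem_singleton] at h; exact hIF h
    · refine List.nodup_append.2 ⟨hmnd, List.nodup_singleton _, ?_⟩
      intro a ha b hb
      rw [List.mem_singleton] at hb; rw [hb]; exact hmF a ha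
  refine ⟨I :: m ++ [F], ?_, rfl, ?_, hnd, ?_⟩
  · -- Chain'
    have hpw : (I :: m ++ [F]).Pairwise (Relation.ReflTransGen E) := by
      rw [List.cons_append]
      refine List.pairwise_cons.2 ⟨fun b _ => h1 b, ?_⟩
      refine List.pairwise_append.2 ⟨hmpw, List.pairwise_singleton _ _, ?_⟩
      intro a _ b hb
      rw [List.mem_singleton] at hb; subst hb; exact h2 a
    have := (hpw.and hnd).isChain
    refine this.imp ?_
    rintro a b ⟨hab, hne⟩
    rcases (Relation.reflTransGen_iff_eq_or_transGen.1 hab) with h | h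
    · exact absurd h.symm hne
    · exact h
  · show ((I :: m) ++ [F]).getLast? = some F
    rw [List.getLast?_concat]
  · intro v
    rw [List.cons_append, List.mem_cons, List.mem_append, List.mem_singleton]
    by_cases hvI : v = I
    · exact Or.inl hvI
    by_cases hvF : v = F
    · exact Or.inr (Or.inr hvF)
    · refine Or.inr (Or.inl ?_)
      exact List.mem_map.2 ⟨⟨v, hvI, hvF⟩, hperm.mem_iff.2 (Finset.mem_toList.2 (Finset.mem_univ _)), rfl⟩
end

section
/- Let (V,E) be a finite directed graph with distinguished vertices I, F ∈ V, I ≠ F. If (V,E) has a covering path from I to F, then the transitive closure (V,E') has a Hamiltonian path from I to F. -/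
open List Relation

private lemma getLast?_dedup {α : Type*} [DecidableEq α] :
    ∀ l : List α, l.dedup.getLast? = l.getLast?
  | [] => rfl
  | a :: l => by
    by_cases h : a ∈ l
    · rw [dedup_cons_of_mem h, getLast?_dedup l]
      cases l with
      | nil => simp at h
      | cons b t => simp [getLast?_cons_cons]
    · rw [dedup_cons_of_notMem h]
      cases l with
      | nil => simp
      | cons b t =>
        have hne : (b :: t).dedup ≠ [] := by
          intro hnil
          have : b ∈ (b :: t).dedup := by simp [mem_dedup]
          simp [hnil] at this
        obtain ⟨x, u, hxu⟩ := exists_cons_of_ne_nil hne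
        rw [hxu, getLast?_cons_cons, ← hxu, getLast?_dedup (b :: t),
          getLast?_cons_cons]

private lemma getLast?_erase {α : Type*} [DecidableEq α] {a b : α} :
    ∀ {l : List α}, l.getLast? = some b → b ≠ a → (l.erase a).getLast? = some b
  | [], h, _ => by simp at h
  | c :: t, h, hba => by
    by_cases hca : c = a
    · subst hca
      rw [erase_cons_head]
      cases t with
      | nil => simp at h; exact absurd h.symm hba
      | cons d s => rwa [getLast?_cons_cons] at h
    · rw [erase_cons_tail (by simpa using hca)]
      cases t with
      | nil => simpa using h
      | cons d s =>
        rw [getLast?_cons_cons] at h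
        have ih := getLast?_erase (l := d :: s) h hba
        have hne : (d :: s).erase a ≠ [] := by
          intro hnil; rw [hnil] at ih; simp at ih
        obtain ⟨x, u, hxu⟩ := exists_cons_of_ne_nil hne
        rw [hxu, getLast?_cons_cons, ← hxu]
        exact ih

private lemma chain_transGen {α : Type*} {E : α → α → Prop} :
    ∀ {l : List α} {a v : α}, List.Chain E a l → v ∈ l → Relation.TransGen E a v
  | [], _, _, _, hv => by simp at hv
  | b :: t, a, v, hc, hv => by
    rcases List.chain_cons.1 hc with ⟨hab, hbt⟩
    rcases List.mem_cons.1 hv with rfl | hv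
    · exact Relation.TransGen.single hab
    · exact (Relation.TransGen.single hab).trans (chain_transGen hbt hv)

/-- If a finite directed graph `(V, E)` with `I ≠ F` has a covering path from `I` to `F`
(a walk starting at `I`, ending at `F`, visiting every vertex at least once), then its
transitive closure (edges given by nonempty walks, i.e. `Relation.TransGen E`) has a
Hamiltonian path from `I` to `F`. -/
theorem covering_path_to_hamiltonian_path {V : Type*} [Fintype V] (E : V → V → Prop)
    (I F : V) (hIF : I ≠ F)
    (hcov : ∃ p : List V, p.Chain' E ∧ p.head? = some I ∧ p.getLast? = some F ∧
      ∀ v : V, v ∈ p) :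
    ∃ q : List V, q.Chain' (Relation.TransGen E) ∧ q.head? = some I ∧
      q.getLast? = some F ∧ q.Nodup ∧ ∀ v : V, v ∈ q := by
  classical
  obtain ⟨p, hchain, hhead, hlast, hmem⟩ := hcov
  -- p = I :: t
  obtain ⟨t, rfl⟩ : ∃ t, p = I :: t := by
    cases p with
    | nil => simp at hhead
    | cons a t =>
      simp only [head?_cons, Option.some.injEq] at hhead
      exact ⟨t, by rw [hhead]⟩
  set p := I :: t with hp
  have hpchain' : p.Chain' (Relation.TransGen E) :=
    hchain.imp fun _ _ h => Relation.TransGen.single h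
  set q := p.dedup with hq
  have hqsub : q <+ p := dedup_sublist p
  have hqchain : q.Chain' (Relation.TransGen E) := hpchain'.sublist hqsub
  have hqnodup : q.Nodup := nodup_dedup p
  have hqlast : q.getLast? = some F := by rw [hq, getLast?_dedup]; exact hlast
  have hqmem : ∀ v, v ∈ q := fun v => (mem_dedup).2 (hmem v)
  -- final list
  refine ⟨I :: q.erase I, ?_, rfl, ?_, ?_, ?_⟩
  · unfold List.Chain'; rw [List.isChain_cons]
    constructor
    · intro h hh
      have hhq : h ∈ q.erase I := mem_of_mem_head? hh
      have hhI : h ≠ I := ((hqnodup.mem_erase_iff).1 hhq).1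
      have : h ∈ p := hqsub.mem ((erase_sublist (a := I) (l := q)).mem hhq)
      have : h ∈ t := by
        rcases List.mem_cons.1 this with rfl | ht
        · exact absurd rfl hhI
        · exact ht
      exact chain_transGen hchain this
    · exact hqchain.sublist (erase_sublist (a := I) (l := q))
  · have hE := getLast?_erase hqlast (Ne.symm hIF)
    have hne : q.erase I ≠ [] := fun hnil => by rw [hnil] at hE; simp at hE
    obtain ⟨x, u, hxu⟩ := exists_cons_of_ne_nil hne
    rw [hxu, getLast?_cons_cons, ← hxu]
    exact hE
  · exact List.nodup_cons.2 ⟨fun h => ((hqnodup.mem_erase_iff).1 h).1 rfl, hqnodup.erase I⟩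
  · intro v
    by_cases hvI : v = I
    · simp [hvI]
    · exact List.mem_cons.2 (Or.inr (mem_erase_of_ne hvI |>.2 (hqmem v)))
end

section
/- Let (V,E,W) be a finite directed graph with edge weights W: E → ℕ, distinguished vertices I, F ∈ V, I ≠ F, and weighted transitive closure (V,E',w'). Every Hamiltonian path from I to F in (V,E',w') of total w'-weight L can be expanded into a covering path from I to F in (V,E) of total W-weight exactly L. -/
/-- The weight of a walk (given as a list of visited vertices) is the sum of the
weights of its edges, counted with multiplicity. -/
def walkWeight {V : Type*} (W : V → V → ℕ) (p : List V) : ℕ :=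
  ((p.zip p.tail).map fun q => W q.1 q.2).sum

/-- The weight `w'(u,v)` in the weighted transitive closure: the minimum weight of a
nonempty walk (a walk with at least one edge) from `u` to `v`. -/
noncomputable def closureWeight {V : Type*} (E : V → V → Prop) (W : V → V → ℕ) (u v : V) : ℕ :=
  sInf {n | ∃ r : List V, 2 ≤ r.length ∧ r.Chain' E ∧ r.head? = some u ∧
    r.getLast? = some v ∧ walkWeight W r = n}

lemma walkWeight_cons_cons {V : Type*} (W : V → V → ℕ) (a b : V) (l : List V) :
    walkWeight W (a :: b :: l) = W a b + walkWeight W (b :: l) := by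
  simp [walkWeight]

lemma walkWeight_glue {V : Type*} (W : V → V → ℕ) :
    ∀ (s : List V) (b : V) (t : List V),
    walkWeight W (s ++ b :: t) = walkWeight W (s ++ [b]) + walkWeight W (b :: t)
  | [], b, t => by simp [walkWeight]
  | [x], b, t => by simp [walkWeight_cons_cons, walkWeight]
  | x :: y :: s, b, t => by
    have h := walkWeight_glue W (y :: s) b t
    simp only [List.cons_append, walkWeight_cons_cons] at *
    omega

lemma transGen_walk {V : Type*} {E : V → V → Prop} {a b : V}
    (h : Relation.TransGen E a b) :
    ∃ r : List V, 2 ≤ r.length ∧ r.Chain' E ∧ r.head? = some a ∧ r.getLast? = some b := by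
  induction h with
  | @single c h => exact ⟨[a, c], by simp, List.isChain_pair.mpr h, rfl, rfl⟩
  | @tail c d hac hcd ih =>
    obtain ⟨r, hlen, hch, hh, hl⟩ := ih
    have hne : r ≠ [] := by rintro rfl; simp at hlen
    refine ⟨r ++ [d], by simp; omega, ?_, ?_, by simp⟩
    · rw [List.Chain', List.isChain_append]
      refine ⟨hch, List.isChain_singleton _, ?_⟩
      intro x hx y hy
      simp at hy
      subst hy
      rw [hl] at hx
      simp at hx
      subst hx
      exact hcd
    · rw [List.head?_append_of_ne_nil _ hne]
      exact hh

lemma closureWeight_spec {V : Type*} {E : V → V → Prop} (W : V → V → ℕ) {a b : V}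
    (h : Relation.TransGen E a b) :
    ∃ r : List V, 2 ≤ r.length ∧ r.Chain' E ∧ r.head? = some a ∧
      r.getLast? = some b ∧ walkWeight W r = closureWeight E W a b := by
  obtain ⟨r, h1, h2, h3, h4⟩ := transGen_walk h
  have hne : {n | ∃ r : List V, 2 ≤ r.length ∧ r.Chain' E ∧ r.head? = some a ∧
      r.getLast? = some b ∧ walkWeight W r = n}.Nonempty := ⟨_, r, h1, h2, h3, h4, rfl⟩
  obtain ⟨r', a1, a2, a3, a4, a5⟩ := Nat.sInf_mem hne
  exact ⟨r', a1, a2, a3, a4, a5⟩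

lemma expand {V : Type*} (E : V → V → Prop) (W : V → V → ℕ) :
    ∀ q : List V, q ≠ [] → q.Chain' (Relation.TransGen E) →
    ∃ p : List V, p.Chain' E ∧ p.head? = q.head? ∧ p.getLast? = q.getLast? ∧
      q.Sublist p ∧ walkWeight W p = walkWeight (closureWeight E W) q
  | [], h, _ => absurd rfl h
  | [x], _, _ => ⟨[x], List.isChain_singleton x, rfl, rfl, List.Sublist.refl _, by simp [walkWeight]⟩
  | a :: b :: rest, _, hch => by
    have hch' : (b :: rest).Chain' (Relation.TransGen E) := hch.tail
    have hab : Relation.TransGen E a b := (List.isChain_cons_cons.mp hch).1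
    obtain ⟨p', c1, c2, c3, c4, c5⟩ := expand E W (b :: rest) (by simp) hch'
    obtain ⟨t, rfl⟩ : ∃ t, p' = b :: t := by
      cases p' with
      | nil => simp at c2
      | cons x xs => simp at c2; exact ⟨xs, by rw [c2]⟩
    obtain ⟨r, h1, h2, h3, h4, h5⟩ := closureWeight_spec W hab
    obtain ⟨r₀, rfl⟩ : ∃ r₀, r = a :: r₀ := by
      cases r with
      | nil => simp at h3
      | cons x xs => simp at h3; exact ⟨xs, by rw [h3]⟩
    have hr₀ : r₀ ≠ [] := by rintro rfl; simp at h1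
    obtain ⟨r₁, rfl⟩ : ∃ r₁, r₀ = r₁ ++ [b] := by
      have hd := List.dropLast_append_getLast hr₀
      rw [show a :: r₀ = (a :: r₀.dropLast) ++ [r₀.getLast hr₀] from by
        rw [List.cons_append, hd], List.getLast?_append_of_ne_nil _ (by simp)] at h4
      simp at h4
      exact ⟨r₀.dropLast, by rw [← h4, hd]⟩
    refine ⟨(a :: r₁) ++ (b :: t), ?_, by simp, ?_, ?_, ?_⟩
    · rw [List.Chain', List.isChain_append]
      rw [show a :: (r₁ ++ [b]) = (a :: r₁) ++ [b] from rfl, List.Chain', List.isChain_append] at h2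
      refine ⟨h2.1, c1, ?_⟩
      intro x hx y hy
      simp at hy
      subst hy
      exact h2.2.2 x hx b (by simp)
    · rw [List.getLast?_append_of_ne_nil _ (by simp : (b:: t) ≠ [])]
      exact c3
    · exact List.Sublist.cons₂ a (c4.trans (List.sublist_append_right r₁ (b :: t)))
    · rw [show (a :: r₁) ++ (b :: t) = (a :: r₁) ++ b :: t from rfl,
        walkWeight_glue, walkWeight_cons_cons]
      rw [show (a :: r₁) ++ [b] = a :: (r₁ ++ [b]) from rfl, h5, c5]
/-- Every Hamiltonian path `q` from `I` to `F` in the weighted transitive closure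
`(V, E', w')` of total `w'`-weight `L` can be expanded (the expansion contains `q` as
a subsequence) into a covering path from `I` to `F` in `(V, E)` of total `W`-weight
exactly `L`. -/
theorem hamiltonian_path_expands_to_covering_path {V : Type*} [Fintype V]
    (E : V → V → Prop) (W : V → V → ℕ) (I F : V) (hIF : I ≠ F)
    (q : List V) (L : ℕ)
    (hchain : q.Chain' (Relation.TransGen E)) (hhead : q.head? = some I)
    (hlast : q.getLast? = some F) (hnodup : q.Nodup) (hcover : ∀ v : V, v ∈ q)
    (hweight : walkWeight (closureWeight E W) q = L) :
    ∃ p : List V, p.Chain' E ∧ p.head? = some I ∧ p.getLast? = some F ∧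
      (∀ v : V, v ∈ p) ∧ q.Sublist p ∧ walkWeight W p = L := by
  obtain ⟨p, hp1, hp2, hp3, hp4, hp5⟩ := expand E W q (by rintro rfl; simp at hhead) hchain
  exact ⟨p, hp1, hp2.trans hhead, hp3.trans hlast,
    fun v => hp4.subset (hcover v), hp4, hp5.trans hweight⟩
end

section
/- Let T ⊆ Σ×Σ be a transition relation on a finite set of states Σ, let s0, t ∈ Σ, and let a_1, …, a_m ∈ Σ be pairwise distinct states. Every execution that starts at s0, ends at t, and visits each of a_1, …, a_m has length at least the minimum, over all permutations σ of {1,…,m} for which all the distances involved are defined, of d(s0, a_{σ(1)}) + Σ_{i=1}^{m-1} d(a_{σ(i)}, a_{σ(i+1)}) + d(a_{σ(m)}, t). -/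
/-- The minimal length (number of transitions) of an execution from `s` to `t`;
meaningful only when `t` is reachable from `s`. An execution is a nonempty list of
states whose consecutive elements are related by `T`; a list of length `n + 1`
represents an execution of length `n`. -/
noncomputable def execDist {S : Type*} (T : S → S → Prop) (s t : S) : ℕ :=
  sInf {n | ∃ p : List S, p.Chain' T ∧ p.head? = some s ∧ p.getLast? = some t ∧
    p.length = n + 1}

lemma chain'_reflTransGen {S : Type*} {T : S → S → Prop} :
    ∀ (q : List S) (x y : S), q.Chain' T → q.head? = some x → q.getLast? = some y →
      Relation.ReflTransGen T x y
  | [], x, y, _, h, _ => by simp at h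
  | [z], x, y, _, hh, hl => by
      simp only [List.head?_cons, Option.some.injEq] at hh
      simp only [List.getLast?_singleton, Option.some.injEq] at hl
      subst hh; subst hl; exact Relation.ReflTransGen.refl
  | z :: w :: q, x, y, hc, hh, hl => by
      simp only [List.head?_cons, Option.some.injEq] at hh
      subst hh
      rw [show List.Chain' T (z :: w :: q) ↔ _ from List.isChain_cons_cons] at hc
      have h2 : (w :: q).getLast? = some y := by
        rw [← hl]; exact (List.getLast?_cons_cons ..).symm
      exact Relation.ReflTransGen.head hc.1 (chain'_reflTransGen (w :: q) w y hc.2 rfl h2)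

lemma execSegment {S : Type*} {T : S → S → Prop} (p : List S) (hp : p.Chain' T)
    (i j : ℕ) (hij : i ≤ j) (hj : j < p.length) :
    Relation.ReflTransGen T p[i] p[j] ∧ execDist T p[i] p[j] ≤ j - i := by
  have hi : i < p.length := lt_of_le_of_lt hij hj
  set q := (p.drop i).take (j - i + 1) with hq
  have hqlen : q.length = j - i + 1 := by
    simp [hq, List.length_take, List.length_drop]; omega
  have hchainq : q.Chain' T := (hp.drop i).take _
  have hhead : q.head? = some p[i] := by
    rw [List.head?_eq_getElem?, hq, List.getElem?_take_of_lt (by omega), List.getElem?_drop]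
    simp [List.getElem?_eq_getElem (by omega : i + 0 < p.length)]
  have hlast : q.getLast? = some p[j] := by
    rw [List.getLast?_eq_getElem?, hqlen]
    simp only [Nat.add_sub_cancel]
    rw [hq, List.getElem?_take_of_lt (by omega), List.getElem?_drop]
    have e : i + (j - i) = j := by omega
    rw [e, List.getElem?_eq_getElem hj]
  refine ⟨chain'_reflTransGen q _ _ hchainq hhead hlast, ?_⟩
  exact Nat.sInf_le ⟨q, hchainq, hhead, hlast, hqlen⟩

lemma telescope : ∀ (m : ℕ) (g : Fin (m + 1) → ℕ), Monotone g →
    (∑ i : Fin m, (g i.succ - g i.castSucc)) = g (Fin.last m) - g 0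
  | 0, g, _ => by simp
  | n + 1, g, hg => by
      rw [Fin.sum_univ_castSucc]
      have ih := telescope n (g ∘ Fin.castSucc) (hg.comp (fun _ _ h => Fin.castSucc_le_castSucc_iff.mpr h))
      simp only [Function.comp] at ih
      have e1 : ∀ i : Fin n, (i.castSucc).succ = (i.succ).castSucc := fun i =>
        (Fin.succ_castSucc i).symm
      rw [show (∑ i : Fin n, (g (i.castSucc).succ - g (i.castSucc).castSucc)) =
          ∑ i : Fin n, (g (i.succ).castSucc - g (i.castSucc).castSucc) by
        exact Finset.sum_congr rfl fun i _ => by rw [e1]]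
      rw [ih]
      have h1 : g 0 ≤ g ((Fin.last n).castSucc) := hg (Fin.zero_le _)
      have h2 : g ((Fin.last n).castSucc) ≤ g ((Fin.last n).succ) := hg (Fin.castSucc_le_succ _)
      have e3 : g ((Fin.last n).succ) = g (Fin.last (n + 1)) := by rw [Fin.succ_last]
      have e0 : g (Fin.castSucc (0 : Fin (n + 1))) = g 0 := by rw [Fin.castSucc_zero]
      omega


/-- Every execution from `s0` to `t` visiting each of the pairwise distinct states
`a 0, …, a m` has length at least the minimum, over all permutations `σ` of the
indices for which all the involved distances are defined (i.e. the corresponding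
reachabilities hold), of
`d(s0, a (σ 0)) + ∑ d(a (σ i), a (σ (i+1))) + d(a (σ m), t)`. -/
theorem execution_length_lower_bound {S : Type*} [Fintype S] (T : S → S → Prop)
    (s0 t : S) (m : ℕ) (a : Fin (m + 1) → S) (hinj : Function.Injective a)
    (p : List S) (hchain : p.Chain' T) (hhead : p.head? = some s0)
    (hlast : p.getLast? = some t) (hvisit : ∀ i : Fin (m + 1), a i ∈ p) :
    sInf {c | ∃ σ : Equiv.Perm (Fin (m + 1)),
        (Relation.ReflTransGen T s0 (a (σ 0)) ∧
         (∀ i : Fin m, Relation.ReflTransGen T (a (σ i.castSucc)) (a (σ i.succ))) ∧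
         Relation.ReflTransGen T (a (σ (Fin.last m))) t) ∧
        execDist T s0 (a (σ 0)) +
          (∑ i : Fin m, execDist T (a (σ i.castSucc)) (a (σ i.succ))) +
          execDist T (a (σ (Fin.last m))) t = c} ≤ p.length - 1 := by
  classical
  have hpne : p ≠ [] := by intro h; rw [h] at hhead; simp at hhead
  have hL : 0 < p.length := List.length_pos_iff.mpr hpne
  set L := p.length with hLdef
  -- head and last as getElem
  have hp0 : p[0] = s0 := by
    have := (List.head?_eq_getElem? : p.head? = p[0]?)
    rw [hhead] at this
    have := (List.getElem?_eq_some_iff.mp this.symm).2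
    exact this
  have hpt : p[L - 1]'(by omega) = t := by
    have := (List.getLast?_eq_getElem? : p.getLast? = p[p.length - 1]?)
    rw [hlast] at this
    exact (List.getElem?_eq_some_iff.mp this.symm).2
  set f : Fin (m + 1) → ℕ := fun i => p.idxOf (a i) with hf
  have hflt : ∀ i, f i < L := fun i => List.idxOf_lt_length_iff.mpr (hvisit i)
  have hfget : ∀ i, p[f i]'(hflt i) = a i := fun i => List.getElem_idxOf (hflt i)
  set σ := Tuple.sort f with hσ
  set g : Fin (m + 1) → ℕ := f ∘ σ with hg
  have hmono : Monotone g := Tuple.monotone_sort f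
  have hgget : ∀ i, p[g i]'(hflt (σ i)) = a (σ i) := fun i => hfget (σ i)
  -- bounds
  have seg1 := execSegment p hchain 0 (g 0) (Nat.zero_le _) (hflt (σ 0))
  rw [hp0, hgget 0] at seg1
  have segmid : ∀ i : Fin m,
      Relation.ReflTransGen T (a (σ i.castSucc)) (a (σ i.succ)) ∧
      execDist T (a (σ i.castSucc)) (a (σ i.succ)) ≤ g i.succ - g i.castSucc := by
    intro i
    have h := execSegment p hchain (g i.castSucc) (g i.succ)
      (hmono (Fin.castSucc_le_succ i)) (hflt (σ i.succ))
    rw [hgget i.castSucc, hgget i.succ] at h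
    exact h
  have seg3 := execSegment p hchain (g (Fin.last m)) (L - 1)
    (by have h := hflt (σ (Fin.last m)); have e : f (σ (Fin.last m)) = g (Fin.last m) := rfl; omega) (by omega)
  rw [hgget (Fin.last m), hpt] at seg3
  set c := execDist T s0 (a (σ 0)) +
      (∑ i : Fin m, execDist T (a (σ i.castSucc)) (a (σ i.succ))) +
      execDist T (a (σ (Fin.last m))) t with hc
  have hmem : c ∈ {c | ∃ σ : Equiv.Perm (Fin (m + 1)),
        (Relation.ReflTransGen T s0 (a (σ 0)) ∧
         (∀ i : Fin m, Relation.ReflTransGen T (a (σ i.castSucc)) (a (σ i.succ))) ∧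
         Relation.ReflTransGen T (a (σ (Fin.last m))) t) ∧
        execDist T s0 (a (σ 0)) +
          (∑ i : Fin m, execDist T (a (σ i.castSucc)) (a (σ i.succ))) +
          execDist T (a (σ (Fin.last m))) t = c} :=
    ⟨σ, ⟨seg1.1, fun i => (segmid i).1, seg3.1⟩, rfl⟩
  have hcle : c ≤ L - 1 := by
    rw [hc]
    have hfg : f (σ (Fin.last m)) = g (Fin.last m) := rfl
    have hsum : (∑ i : Fin m, execDist T (a (σ i.castSucc)) (a (σ i.succ))) ≤
        g (Fin.last m) - g 0 := by
      rw [← telescope m g hmono]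
      exact Finset.sum_le_sum fun i _ => (segmid i).2
    have h1 := seg1.2
    have h3 := seg3.2
    have hg0 : g 0 ≤ g (Fin.last m) := hmono (Fin.zero_le _)
    have hgl : g (Fin.last m) < L := hflt _
    simp only [Nat.sub_zero] at h1
    omega
  exact le_trans (Nat.sInf_le hmem) hcle
end

section
/- Let T ⊆ Σ×Σ be a transition relation on a finite set of states Σ, let s0, t ∈ Σ, and let a_1, …, a_m ∈ Σ be pairwise distinct states. If there exists an execution from s0 to t that visits each of a_1, …, a_m, then the minimum length of such an execution equals the minimum, over all permutations σ of {1,…,m} for which all the distances involved are defined, of d(s0, a_{σ(1)}) + Σ_{i=1}^{m-1} d(a_{σ(i)}, a_{σ(i+1)}) + d(a_{σ(m)}, t). -/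
section Aux
variable {S : Type*} {T : S → S → Prop}

lemma execDist_le {s t : S} {p : List S} (hc : p.Chain' T) (hh : p.head? = some s)
    (hl : p.getLast? = some t) {n : ℕ} (hn : p.length = n + 1) : execDist T s t ≤ n := by
  unfold execDist
  exact Nat.sInf_le ⟨p, hc, hh, hl, hn⟩

lemma reach_path {s t : S} (h : Relation.ReflTransGen T s t) :
    ∃ p : List S, p.Chain' T ∧ p.head? = some s ∧ p.getLast? = some t ∧
      ∃ n, p.length = n + 1 := by
  induction h with
  | refl => exact ⟨[s], by simp [List.Chain'], by simp, by simp, 0, rfl⟩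
  | @tail b c h1 h2 ih =>
    obtain ⟨p, hc, hh, hl, n, hn⟩ := ih
    have hne : p ≠ [] := by rintro rfl; simp at hh
    refine ⟨p ++ [c], ?_, ?_, List.getLast?_concat, n + 1, by simp [hn]⟩
    · refine List.IsChain.append hc (by simp) ?_
      intro x hx y hy
      simp at hy
      rw [hl] at hx
      simp at hx
      subst hx hy
      exact h2
    · cases p with
      | nil => simp at hh
      | cons x xs => simpa using hh

lemma execDist_realize {s t : S} (h : Relation.ReflTransGen T s t) :
    ∃ p : List S, p.Chain' T ∧ p.head? = some s ∧ p.getLast? = some t ∧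
      p.length = execDist T s t + 1 := by
  obtain ⟨p, hc, hh, hl, n, hn⟩ := reach_path h
  have : execDist T s t ∈ {n | ∃ p : List S, p.Chain' T ∧ p.head? = some s ∧
      p.getLast? = some t ∧ p.length = n + 1} :=
    Nat.sInf_mem ⟨n, p, hc, hh, hl, hn⟩
  exact this

lemma path_append {s u t : S} {p q : List S} (hp : p.Chain' T) (hph : p.head? = some s)
    (hpl : p.getLast? = some u) (hq : q.Chain' T) (hqh : q.head? = some u)
    (hql : q.getLast? = some t) :
    ∃ r : List S, r.Chain' T ∧ r.head? = some s ∧ r.getLast? = some t ∧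
      (∀ x, x ∈ p ∨ x ∈ q → x ∈ r) ∧ r.length + 1 = p.length + q.length := by
  have hpne : p ≠ [] := by rintro rfl; simp at hph
  have humem : u ∈ p := by
    have := List.getLast?_eq_getLast hpne
    rw [this] at hpl
    simp at hpl
    rw [← hpl]
    exact List.getLast_mem hpne
  cases q with
  | nil => simp at hqh
  | cons y ys =>
    simp at hqh
    subst hqh
    refine ⟨p ++ ys, ?_, ?_, ?_, ?_, by simp +arith⟩
    · refine List.IsChain.append hp ((List.isChain_cons.mp hq).2) ?_
      intro x hx z hz
      rw [hpl] at hx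
      simp at hx
      subst hx
      exact (List.isChain_cons.mp hq).1 z hz
    · cases p with
      | nil => simp at hph
      | cons a as => simpa using hph
    · cases ys with
      | nil =>
        simp at hql
        subst hql
        simpa using hpl
      | cons b bs =>
        simp only [List.getLast?_cons_cons] at hql
        rw [List.getLast?_append, hql]
        rfl
    · intro x hx
      rcases hx with hx | hx
      · exact List.mem_append_left _ hx
      · simp at hx
        rcases hx with rfl | hx
        · exact List.mem_append_left _ humem
        · exact List.mem_append_right _ hx

lemma execDist_self (s : S) : execDist T s s ≤ 0 :=
  execDist_le (p := [s]) (by simp [List.Chain']) (by simp) (by simp) (by simp)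

lemma execDist_extend {s v u : S} (h : Relation.ReflTransGen T s v) (h2 : T v u) :
    execDist T s u ≤ execDist T s v + 1 := by
  obtain ⟨p, hc, hh, hl, hn⟩ := execDist_realize h
  have hq2 : ([v, u] : List S).Chain' T := by simp [List.Chain', h2]
  have hq2h : ([v, u] : List S).head? = some v := by simp
  have hq2l : ([v, u] : List S).getLast? = some u := by simp
  obtain ⟨r, hrc, hrh, hrl, _, hrlen⟩ := path_append hc hh hl hq2 hq2h hq2l
  refine execDist_le hrc hrh hrl (n := execDist T s v + 1) ?_
  simp [hn] at hrlen
  omega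

lemma ed_segment {p : List S} (hp : p.Chain' T) :
    ∀ d j (h : j + d < p.length),
      Relation.ReflTransGen T (p.get ⟨j, by omega⟩) (p.get ⟨j + d, h⟩) ∧
      execDist T (p.get ⟨j, by omega⟩) (p.get ⟨j + d, h⟩) ≤ d := by
  intro d
  induction d with
  | zero => intro j h; exact ⟨Relation.ReflTransGen.refl, execDist_self _⟩
  | succ d ih =>
    intro j h
    have h' : j + d < p.length := by omega
    obtain ⟨hr, hd⟩ := ih j h'
    have hstep : T (p.get ⟨j + d, h'⟩) (p.get ⟨j + d + 1, by omega⟩) :=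
      List.isChain_iff_getElem.mp hp (j + d) (by omega)
    have heq : (⟨j + (d+1), h⟩ : Fin p.length) = ⟨j + d + 1, by omega⟩ := rfl
    rw [heq]
    exact ⟨hr.tail hstep, le_trans (execDist_extend hr hstep) (by omega)⟩

lemma ed_build (g : ℕ → S) : ∀ K, (∀ i < K, Relation.ReflTransGen T (g i) (g (i + 1))) →
    ∃ p : List S, p.Chain' T ∧ p.head? = some (g 0) ∧ p.getLast? = some (g K) ∧
      (∀ i ≤ K, g i ∈ p) ∧
      p.length = (∑ i ∈ Finset.range K, execDist T (g i) (g (i + 1))) + 1 := by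
  intro K
  induction K with
  | zero =>
    intro _
    exact ⟨[g 0], by simp [List.Chain'], by simp, by simp, by intro i hi; interval_cases i; simp, by simp⟩
  | succ K ih =>
    intro hr
    obtain ⟨p, hc, hh, hl, hmem, hlen⟩ := ih (fun i hi => hr i (by omega))
    obtain ⟨q, hqc, hqh, hql, hqlen⟩ := execDist_realize (hr K (by omega))
    obtain ⟨r, hrc, hrh, hrl, hrmem, hrlen⟩ := path_append hc hh hl hqc hqh hql
    refine ⟨r, hrc, hrh, hrl, ?_, ?_⟩
    · intro i hi
      rcases Nat.lt_or_ge i (K + 1) with h | h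
      · exact hrmem _ (Or.inl (hmem i (by omega)))
      · have : i = K + 1 := by omega
        subst this
        refine hrmem _ (Or.inr ?_)
        have hqne : q ≠ [] := by rintro rfl; simp at hqh
        rw [List.getLast?_eq_getLast hqne] at hql
        simp at hql
        rw [← hql]
        exact List.getLast_mem hqne
    · rw [Finset.sum_range_succ]
      omega

end Aux

def wp {S : Type*} (s0 t : S) (m : ℕ) (b : Fin (m + 1) → S) : ℕ → S :=
  fun i => if i = 0 then s0 else if h : i ≤ m + 1 then b ⟨i - 1, by omega⟩ else t

lemma wp_zero {S : Type*} (s0 t : S) (m : ℕ) (b : Fin (m + 1) → S) :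
    wp s0 t m b 0 = s0 := by simp [wp]

lemma wp_succ {S : Type*} (s0 t : S) (m : ℕ) (b : Fin (m + 1) → S) {i : ℕ} (h : i ≤ m) :
    wp s0 t m b (i + 1) = b ⟨i, by omega⟩ := by
  have h1 : i + 1 ≤ m + 1 := by omega
  simp [wp, h1]

lemma wp_top {S : Type*} (s0 t : S) (m : ℕ) (b : Fin (m + 1) → S) :
    wp s0 t m b (m + 2) = t := by
  have h1 : ¬ (m + 2 ≤ m + 1) := by omega
  simp [wp, h1]

lemma ed_dir2 {S : Type*} (T : S → S → Prop) (s0 t : S) (m : ℕ) (a : Fin (m + 1) → S)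
    (σ : Equiv.Perm (Fin (m + 1)))
    (r0 : Relation.ReflTransGen T s0 (a (σ 0)))
    (rmid : ∀ i : Fin m, Relation.ReflTransGen T (a (σ i.castSucc)) (a (σ i.succ)))
    (rlast : Relation.ReflTransGen T (a (σ (Fin.last m))) t) :
    ∃ p : List S, p.Chain' T ∧ p.head? = some s0 ∧ p.getLast? = some t ∧
      (∀ i : Fin (m + 1), a i ∈ p) ∧
      p.length = (execDist T s0 (a (σ 0)) +
        (∑ i : Fin m, execDist T (a (σ i.castSucc)) (a (σ i.succ))) +
        execDist T (a (σ (Fin.last m))) t) + 1 := by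
  set b : Fin (m + 1) → S := fun j => a (σ j) with hb
  set g : ℕ → S := wp s0 t m b with hg
  have hg0 : g 0 = s0 := wp_zero s0 t m b
  have hgs : ∀ i (h : i ≤ m), g (i + 1) = a (σ ⟨i, by omega⟩) := fun i h => wp_succ s0 t m b h
  have hgtop : g (m + 2) = t := wp_top s0 t m b
  have hg1 : g 1 = a (σ 0) := by rw [hgs 0 (by omega)]; rw [Fin.mk_zero]
  have hglast : g (m + 1) = a (σ (Fin.last m)) := by
    rw [hgs m le_rfl]
    congr 1
  have hreach : ∀ i < m + 2, Relation.ReflTransGen T (g i) (g (i + 1)) := by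
    intro i hi
    match i, hi with
    | 0, _ => rw [hg0, hg1]; exact r0
    | (j+1), hi =>
      rcases Nat.lt_or_ge j m with hj | hj
      · rw [hgs j (by omega), hgs (j+1) (by omega)]
        have e1 : (⟨j, by omega⟩ : Fin (m+1)) = (⟨j, hj⟩ : Fin m).castSucc := rfl
        have e2 : (⟨j + 1, by omega⟩ : Fin (m+1)) = (⟨j, hj⟩ : Fin m).succ := rfl
        rw [e1, e2]
        exact rmid ⟨j, hj⟩
      · have : j = m := by omega
        subst this
        rw [show j + 1 + 1 = j + 2 from rfl, hgtop, hglast]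
        exact rlast
  obtain ⟨p, hc, hh, hl, hmem, hlen⟩ := ed_build g (m + 2) hreach
  refine ⟨p, hc, by rwa [hg0] at hh, by rwa [hgtop] at hl, ?_, ?_⟩
  · intro i
    have h1 : (↑(σ.symm i) : ℕ) + 1 ≤ m + 2 := by have := (σ.symm i).isLt; omega
    have h2 := hmem _ h1
    rw [hgs _ (by have := (σ.symm i).isLt; omega)] at h2
    rw [Fin.eta, Equiv.apply_symm_apply] at h2
    exact h2
  · rw [hlen]
    congr 1
    rw [Finset.sum_range_succ, Finset.sum_range_succ']
    have hmid : ∑ i ∈ Finset.range m, execDist T (g (i + 1)) (g (i + 1 + 1)) =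
        ∑ i : Fin m, execDist T (a (σ i.castSucc)) (a (σ i.succ)) := by
      rw [← Fin.sum_univ_eq_sum_range (fun i => execDist T (g (i + 1)) (g (i + 1 + 1))) m]
      refine Finset.sum_congr rfl ?_
      intro i _
      rw [hgs _ (by omega), hgs _ (by have := i.isLt; omega)]
      rfl
    rw [hmid, hg0, hg1, hglast, hgtop]
    ring

lemma ed_dir1 {S : Type*} (T : S → S → Prop) (s0 t : S) (m : ℕ) (a : Fin (m + 1) → S)
    (hinj : Function.Injective a) {n : ℕ} {p : List S} (hc : p.Chain' T)
    (hh : p.head? = some s0) (hl : p.getLast? = some t)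
    (hmem : ∀ i : Fin (m + 1), a i ∈ p) (hlen : p.length = n + 1) :
    ∃ c, (∃ σ : Equiv.Perm (Fin (m + 1)),
        (Relation.ReflTransGen T s0 (a (σ 0)) ∧
         (∀ i : Fin m, Relation.ReflTransGen T (a (σ i.castSucc)) (a (σ i.succ))) ∧
         Relation.ReflTransGen T (a (σ (Fin.last m))) t) ∧
        execDist T s0 (a (σ 0)) +
          (∑ i : Fin m, execDist T (a (σ i.castSucc)) (a (σ i.succ))) +
          execDist T (a (σ (Fin.last m))) t = c) ∧ c ≤ n := by
  classical
  set pos : Fin (m + 1) → ℕ := fun i => List.idxOf (a i) p with hpos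
  have hposlt : ∀ i, pos i < p.length := fun i => List.idxOf_lt_length_iff.mpr (hmem i)
  have hget : ∀ i, p.get ⟨pos i, hposlt i⟩ = a i := fun i => List.getElem_idxOf (hposlt i)
  have posinj : Function.Injective pos := by
    intro i j hij
    apply hinj
    rw [← hget i, ← hget j]
    simp only [hij]
  set σ : Equiv.Perm (Fin (m + 1)) := Tuple.sort pos with hσ
  have hmono : Monotone (pos ∘ ⇑σ) := Tuple.monotone_sort pos
  have hsm : StrictMono (pos ∘ ⇑σ) :=
    hmono.strictMono_of_injective (posinj.comp σ.injective)
  clear_value σ pos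
  -- endpoints
  have hpne : p ≠ [] := by rintro rfl; simp at hh
  have h0 : p.get ⟨0, by omega⟩ = s0 := by
    cases p with
    | nil => simp at hh
    | cons x xs => simp at hh; simpa using hh
  have hn : p.get ⟨n, by omega⟩ = t := by
    rw [List.getLast?_eq_getLast hpne] at hl
    simp only [Option.some.injEq] at hl
    rw [← hl, List.getLast_eq_getElem]
    simp [hlen]
  -- key segment facts
  have key : ∀ x y : Fin (m + 1), pos (σ x) ≤ pos (σ y) →
      Relation.ReflTransGen T (a (σ x)) (a (σ y)) ∧
      execDist T (a (σ x)) (a (σ y)) ≤ pos (σ y) - pos (σ x) := by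
    intro x y hxy
    have hy := hposlt (σ y)
    have h := ed_segment hc (pos (σ y) - pos (σ x)) (pos (σ x)) (by omega)
    have e2 : p.get ⟨pos (σ x) + (pos (σ y) - pos (σ x)), by omega⟩ = a (σ y) := by
      rw [show (⟨pos (σ x) + (pos (σ y) - pos (σ x)), by omega⟩ : Fin p.length) =
        ⟨pos (σ y), hy⟩ from Fin.ext (by simp; omega)]
      exact hget _
    rw [hget (σ x), e2] at h
    exact h
  have hfirst : Relation.ReflTransGen T s0 (a (σ 0)) ∧
      execDist T s0 (a (σ 0)) ≤ pos (σ 0) := by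
    have h := ed_segment hc (pos (σ 0)) 0 (by have := hposlt (σ 0); omega)
    have e2 : p.get ⟨0 + pos (σ 0), by have := hposlt (σ 0); omega⟩ = a (σ 0) := by
      rw [show (⟨0 + pos (σ 0), by have := hposlt (σ 0); omega⟩ : Fin p.length) =
        ⟨pos (σ 0), hposlt _⟩ from Fin.ext (by simp)]
      exact hget _
    rw [h0, e2] at h
    exact h
  have hql_le : pos (σ (Fin.last m)) ≤ n := by have := hposlt (σ (Fin.last m)); omega
  have hlast : Relation.ReflTransGen T (a (σ (Fin.last m))) t ∧
      execDist T (a (σ (Fin.last m))) t ≤ n - pos (σ (Fin.last m)) := by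
    have h := ed_segment hc (n - pos (σ (Fin.last m))) (pos (σ (Fin.last m))) (by omega)
    have e2 : p.get ⟨pos (σ (Fin.last m)) + (n - pos (σ (Fin.last m))), by omega⟩ = t := by
      rw [show (⟨pos (σ (Fin.last m)) + (n - pos (σ (Fin.last m))), by omega⟩ : Fin p.length) =
        ⟨n, by omega⟩ from Fin.ext (by simp; omega)]
      exact hn
    rw [hget (σ (Fin.last m)), e2] at h
    exact h
  have hq0_le : pos (σ 0) ≤ pos (σ (Fin.last m)) := hmono (Fin.le_last 0)
  -- telescoping bound on the middle sum
  set f : ℕ → ℕ := fun k => pos (σ ⟨min k m, by omega⟩) with hf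
  have hfmono : Monotone f := by
    intro x y hxy
    exact hmono (show (⟨min x m, by omega⟩ : Fin (m+1)) ≤ ⟨min y m, by omega⟩ from
      by simp only [Fin.mk_le_mk]; exact min_le_min hxy le_rfl)
  have hmid_le : ∀ i : Fin m, execDist T (a (σ i.castSucc)) (a (σ i.succ)) ≤
      f (↑i + 1) - f ↑i := by
    intro i
    have hi := i.isLt
    have e1 : (⟨min (↑i) m, by omega⟩ : Fin (m+1)) = i.castSucc :=
      Fin.ext (by simp only [Fin.coe_castSucc]; omega)
    have e2 : (⟨min (↑i + 1) m, by omega⟩ : Fin (m+1)) = i.succ :=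
      Fin.ext (by simp only [Fin.val_succ]; omega)
    have hle : pos (σ i.castSucc) ≤ pos (σ i.succ) :=
      le_of_lt (hsm (Fin.castSucc_lt_succ (i := i)))
    have h := (key i.castSucc i.succ hle).2
    rw [hf]
    simp only [e1, e2]
    exact h
  have hsum : (∑ i : Fin m, execDist T (a (σ i.castSucc)) (a (σ i.succ))) ≤
      pos (σ (Fin.last m)) - pos (σ 0) := by
    calc (∑ i : Fin m, execDist T (a (σ i.castSucc)) (a (σ i.succ)))
        ≤ ∑ i : Fin m, (f (↑i + 1) - f ↑i) := Finset.sum_le_sum (fun i _ => hmid_le i)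
      _ = ∑ i ∈ Finset.range m, (f (i + 1) - f i) :=
          Fin.sum_univ_eq_sum_range (fun k => f (k + 1) - f k) m
      _ = f m - f 0 := Finset.sum_range_tsub hfmono m
      _ = pos (σ (Fin.last m)) - pos (σ 0) := by
          have e1 : (⟨min m m, by omega⟩ : Fin (m+1)) = Fin.last m :=
            Fin.ext (by simp [Fin.val_last])
          have e2 : (⟨min 0 m, by omega⟩ : Fin (m+1)) = 0 :=
            Fin.ext (by simp)
          rw [hf]
          simp only [e1, e2]
  refine ⟨_, ⟨σ, ⟨hfirst.1, fun i => (key i.castSucc i.succ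
    (le_of_lt (hsm (Fin.castSucc_lt_succ (i := i))))).1, hlast.1⟩, rfl⟩, ?_⟩
  have h1 := hfirst.2
  have h3 := hlast.2
  omega


/-- If some execution from `s0` to `t` visits each of the pairwise distinct states
`a 0, …, a m`, then the minimum length of such an execution equals the minimum, over
all permutations `σ` of the indices for which all the involved distances are defined
(i.e. the corresponding reachabilities hold), of
`d(s0, a (σ 0)) + ∑ d(a (σ i), a (σ (i+1))) + d(a (σ m), t)`. -/
theorem min_execution_length_eq {S : Type*} [Fintype S] (T : S → S → Prop)
    (s0 t : S) (m : ℕ) (a : Fin (m + 1) → S) (hinj : Function.Injective a)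
    (hex : ∃ p : List S, p.Chain' T ∧ p.head? = some s0 ∧ p.getLast? = some t ∧
      ∀ i : Fin (m + 1), a i ∈ p) :
    sInf {n | ∃ p : List S, p.Chain' T ∧ p.head? = some s0 ∧ p.getLast? = some t ∧
        (∀ i : Fin (m + 1), a i ∈ p) ∧ p.length = n + 1} =
    sInf {c | ∃ σ : Equiv.Perm (Fin (m + 1)),
        (Relation.ReflTransGen T s0 (a (σ 0)) ∧
         (∀ i : Fin m, Relation.ReflTransGen T (a (σ i.castSucc)) (a (σ i.succ))) ∧
         Relation.ReflTransGen T (a (σ (Fin.last m))) t) ∧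
        execDist T s0 (a (σ 0)) +
          (∑ i : Fin m, execDist T (a (σ i.castSucc)) (a (σ i.succ))) +
          execDist T (a (σ (Fin.last m))) t = c} := by
  set A := {n | ∃ p : List S, p.Chain' T ∧ p.head? = some s0 ∧ p.getLast? = some t ∧
      (∀ i : Fin (m + 1), a i ∈ p) ∧ p.length = n + 1} with hA
  set B := {c | ∃ σ : Equiv.Perm (Fin (m + 1)),
      (Relation.ReflTransGen T s0 (a (σ 0)) ∧
       (∀ i : Fin m, Relation.ReflTransGen T (a (σ i.castSucc)) (a (σ i.succ))) ∧
       Relation.ReflTransGen T (a (σ (Fin.last m))) t) ∧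
      execDist T s0 (a (σ 0)) +
        (∑ i : Fin m, execDist T (a (σ i.castSucc)) (a (σ i.succ))) +
        execDist T (a (σ (Fin.last m))) t = c} with hB
  have hAne : A.Nonempty := by
    obtain ⟨p, hc, hh, hl, hm⟩ := hex
    have hpne : p ≠ [] := by rintro rfl; simp at hh
    have : 1 ≤ p.length := List.length_pos_iff.mpr hpne
    exact ⟨p.length - 1, p, hc, hh, hl, hm, by omega⟩
  obtain ⟨p, hc, hh, hl, hm, hlen⟩ := Nat.sInf_mem hAne
  obtain ⟨c, hcB, hcle⟩ := ed_dir1 T s0 t m a hinj hc hh hl hm hlen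
  have hBne : B.Nonempty := ⟨c, hcB⟩
  apply le_antisymm
  · obtain ⟨σ, ⟨r0, rmid, rlast⟩, hsum⟩ := Nat.sInf_mem hBne
    obtain ⟨q, hqc, hqh, hql, hqm, hqlen⟩ := ed_dir2 T s0 t m a σ r0 rmid rlast
    exact Nat.sInf_le ⟨q, hqc, hqh, hql, hqm, by rw [hqlen, hsum]⟩
  · exact le_trans (Nat.sInf_le hcB) hcle
end
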